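/- For every i ∈ {0,…,n}, the F-subspace F_i = ker(σ̄^i) of L has dimension i over F. -/

import Mathlib

/-- A Ferrers diagram of order `n`, given by its column heights
`c 0 ≤ c 1 ≤ … ≤ c (n-1) ≤ n` (so `c j` is the number of dots in the (j+1)-st column). -/
def IsFerrersDiagram (n : ℕ) (c : Fin n → ℕ) : Prop :=
  Monotone c ∧ ∀ i, c i ≤ n

/-- Extension of the column-height function to `ℕ`, by zero. -/
def colExt (n : ℕ) (c : Fin n → ℕ) : ℕ → ℕ :=
  fun k => if h : k < n then c ⟨k, h⟩ else 0

/-- `ν_j(D,d) = Σ_{i=1}^{n-j} max{0, c_i - d + 1 + j}` (truncated subtraction gives the max). -/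
def nuJ (n d j : ℕ) (c : Fin n → ℕ) : ℕ :=
  ∑ i ∈ Finset.range (n - j), (colExt n c i + 1 + j - d)

/-- `ν_min(D,d) = min{ν_j(D,d) : 0 ≤ j ≤ d-1}`. -/
noncomputable def nuMin (n d : ℕ) (c : Fin n → ℕ) : ℕ :=
  sInf {k | ∃ j < d, k = nuJ n d j c}

/-- A Ferrers diagram is monotone if `c (i+1) > c i` whenever `0 < c i < n`. -/
def DiagMonotone (n : ℕ) (c : Fin n → ℕ) : Prop :=
  ∀ i : Fin n, ∀ hi : (i : ℕ) + 1 < n, 0 < c i → c i < n → c i < c ⟨(i : ℕ) + 1, hi⟩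

/-- A Ferrers diagram is convex if `c (i+1) - c i ≤ 1` for all `i`. -/
def DiagConvex (n : ℕ) (c : Fin n → ℕ) : Prop :=
  ∀ i : Fin n, ∀ hi : (i : ℕ) + 1 < n, c ⟨(i : ℕ) + 1, hi⟩ ≤ c i + 1

/-- A Ferrers diagram is strictly monotone if `c (i+1) > c i` whenever `c i > 0`. -/
def DiagStrictlyMonotone (n : ℕ) (c : Fin n → ℕ) : Prop :=
  ∀ i : Fin n, ∀ hi : (i : ℕ) + 1 < n, 0 < c i → c i < c ⟨(i : ℕ) + 1, hi⟩

/-- A Ferrers diagram is initially convex if `c 1 ≤ 1` and `c (i+1) - c i ≤ 1` for all `i`. -/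
def DiagInitiallyConvex (n : ℕ) (c : Fin n → ℕ) : Prop :=
  (∀ h : 0 < n, c ⟨0, h⟩ ≤ 1) ∧ DiagConvex n c

/-- `h` is an admissible `p`-height for the Ferrers diagram `c`: `p^h ∣ n`, `p^h ∣ c i` for
all `i`, and `c (n-r) = c (n-s)` (1-indexed) whenever `r, s` lie in the same block
`{Q p^h, …, (Q+1) p^h - 1}`. -/
def HeightOK (p n h : ℕ) (c : Fin n → ℕ) : Prop :=
  p ^ h ∣ n ∧ (∀ i, p ^ h ∣ c i) ∧
    ∀ r s : Fin n, (r : ℕ) / p ^ h = (s : ℕ) / p ^ h →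
      c ⟨n - 1 - (r : ℕ), by have := r.isLt; omega⟩ =
        c ⟨n - 1 - (s : ℕ), by have := s.isLt; omega⟩

/-- The `p`-height of a Ferrers diagram: the largest admissible `h`. -/
noncomputable def pHeight (p n : ℕ) (c : Fin n → ℕ) : ℕ :=
  sSup {h | HeightOK p n h c}

/-- The `p`-contraction of a Ferrers diagram: `c'_i = c_{p^h i} / p^h` (1-indexed),
a diagram of order `n / p^h`, where `h` is the `p`-height. -/
noncomputable def pContraction (p n : ℕ) (c : Fin n → ℕ) :
    Fin (n / p ^ pHeight p n c) → ℕ :=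
  fun i => colExt n c (p ^ pHeight p n c * ((i : ℕ) + 1) - 1) / p ^ pHeight p n c

/-- A Ferrers diagram is `p`-monotone if its `p`-contraction is monotone. -/
def IsPMonotone (p n : ℕ) (c : Fin n → ℕ) : Prop :=
  DiagMonotone (n / p ^ pHeight p n c) (pContraction p n c)

/-- A Ferrers diagram is `p`-convex if its `p`-contraction is convex. -/
def IsPConvex (p n : ℕ) (c : Fin n → ℕ) : Prop :=
  DiagConvex (n / p ^ pHeight p n c) (pContraction p n c)

/-- A Ferrers diagram is strictly `p`-monotone if its `p`-contraction is strictly monotone. -/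
def IsStrictlyPMonotone (p n : ℕ) (c : Fin n → ℕ) : Prop :=
  DiagStrictlyMonotone (n / p ^ pHeight p n c) (pContraction p n c)

/-- A Ferrers diagram is initially `p`-convex if its `p`-contraction is initially convex. -/
def IsInitiallyPConvex (p n : ℕ) (c : Fin n → ℕ) : Prop :=
  DiagInitiallyConvex (n / p ^ pHeight p n c) (pContraction p n c)

/-- The adjoint Ferrers diagram: column `j+1` of `D^⊤` has `#{i : c i ≥ n - j}` dots. -/
def adjointDiag (n : ℕ) (c : Fin n → ℕ) : Fin n → ℕ :=
  fun j => (Finset.univ.filter (fun i : Fin n => n - (j : ℕ) ≤ c i)).card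

/-- `|D ∩ Δ_{i+1}^n|`: the number of dots of `D` on the (i+1)-st diagonal (0-indexed `i`). -/
def diagDots (n : ℕ) (c : Fin n → ℕ) (i : ℕ) : ℕ :=
  ((Finset.range n).filter (fun r => r + i < n ∧ r < colExt n c (r + i))).card

/-- The pair `(D, d)` is MDS-constructible if
`ν_min(D,d) = Σ_{i=1}^n max{0, |D ∩ Δ_i^n| - d + 1}`. -/
def IsMDSConstructibleP (n d : ℕ) (c : Fin n → ℕ) : Prop :=
  nuMin n d c = ∑ i ∈ Finset.range n, (diagDots n c i + 1 - d)

/-- `σ̄ = σ - id`, as an `F`-linear endomorphism of `L`. -/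
def sbar {F L : Type*} [Field F] [Field L] [Algebra F L] (σ : L ≃ₐ[F] L) :
    L →ₗ[F] L :=
  σ.toLinearMap - LinearMap.id

open Module LinearMap in
private lemma finrank_ker_comp_le' {K V : Type*} [Field K] [AddCommGroup V] [Module K V]
    [FiniteDimensional K V] (f g : V →ₗ[K] V) :
    finrank K (ker (f ∘ₗ g)) ≤ finrank K (ker f) + finrank K (ker g) := by
  have hmaps : ∀ x ∈ Submodule.comap g (ker f), g x ∈ ker f := fun x hx => hx
  set h : Submodule.comap g (ker f) →ₗ[K] ker f := g.restrict hmaps with hh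
  have hrn := LinearMap.finrank_range_add_finrank_ker h
  have h1 : finrank K (LinearMap.range h) ≤ finrank K (ker f) :=
    Submodule.finrank_le _
  have h2 : finrank K (LinearMap.ker h) ≤ finrank K (ker g) := by
    rw [← Submodule.finrank_map_subtype_eq]
    apply Submodule.finrank_mono
    rintro x ⟨y, hy, rfl⟩
    have : g (y : V) = 0 := congrArg Subtype.val (show h y = 0 from hy)
    exact this
  rw [ker_comp]
  omega

/-- for every `i ∈ {0,…,n}`, the subspace `F_i = ker(σ̄^i)` of `L`
has `F`-dimension `i`. -/
theorem statement2 {p m : ℕ} (hp : p.Prime) (hm : 1 ≤ m)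
    {F L : Type*} [Field F] [Field L] [Algebra F L] [IsGalois F L] [FiniteDimensional F L]
    [CharP F p] (hn : Module.finrank F L = p ^ m)
    (σ : L ≃ₐ[F] L) (hσ : ∀ τ : L ≃ₐ[F] L, τ ∈ Subgroup.zpowers σ)
    (i : ℕ) (hi : i ≤ p ^ m) :
    Module.finrank F (LinearMap.ker (sbar σ ^ i)) = i := by
    classical
  haveI : Fact p.Prime := ⟨hp⟩
  set f : L →ₗ[F] L := sbar σ with hf
  have hcard : Fintype.card (L ≃ₐ[F] L) = p ^ m := by
    rw [← Nat.card_eq_fintype_card, IsGalois.card_aut_eq_finrank, hn]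
  haveI : CharP (L →ₗ[F] L) p := by
    refine charP_of_injective_algebraMap (show Function.Injective (algebraMap F (L →ₗ[F] L)) from fun a b hab => ?_) p
    have h1 := LinearMap.congr_fun hab (1 : L)
    rw [Module.algebraMap_end_apply, Module.algebraMap_end_apply] at h1
    rwa [← Algebra.algebraMap_eq_smul_one, ← Algebra.algebraMap_eq_smul_one,
      (algebraMap F L).injective.eq_iff] at h1
  have hσn : σ ^ (p ^ m) = 1 := by rw [← hcard]; exact pow_card_eq_one
  have hfn : f ^ (p ^ m) = 0 := by
    have h1 : f = σ.toLinearMap - 1 := rfl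
    rw [h1, sub_pow_char_pow_of_commute p m (Commute.one_right _), one_pow,
      ← AlgEquiv.pow_toLinearMap, hσn]
    ext x; simp
  have hker1 : LinearMap.ker f = Submodule.span F {(1 : L)} := by
    apply le_antisymm
    · intro x hx
      have hx' : σ x = x := by
        have h0 := LinearMap.mem_ker.mp hx
        rw [hf] at h0
        simpa [sbar, sub_eq_zero] using h0
      have hnat : ∀ j : ℕ, (σ ^ j) x = x := by
        intro j
        induction j with
        | zero => rfl
        | succ j ih => rw [pow_succ, AlgEquiv.mul_apply, hx', ih]
      have hfix : ∀ τ : L ≃ₐ[F] L, τ x = x := by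
        intro τ
        obtain ⟨k, hk⟩ := Subgroup.mem_zpowers_iff.mp (hσ τ)
        subst hk
        obtain ⟨j, rfl | rfl⟩ := k.eq_nat_or_neg
        · simpa [zpow_natCast] using hnat j
        · rw [zpow_neg, zpow_natCast]
          apply (σ ^ j).injective
          show (σ ^ j) ((σ ^ j)⁻¹ x) = (σ ^ j) x
          rw [← AlgEquiv.mul_apply, mul_inv_cancel, hnat j, AlgEquiv.one_apply]
      have hbot : IntermediateField.fixedField (⊤ : Subgroup (L ≃ₐ[F] L)) = ⊥ := by
        rw [← IntermediateField.fixingSubgroup_bot (F := F) (E := L), IsGalois.fixedField_fixingSubgroup]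
      have hx2 : x ∈ (⊥ : IntermediateField F L) := by
        rw [← hbot]
        intro g
        exact hfix g.1
      rw [IntermediateField.mem_bot] at hx2
      obtain ⟨a, rfl⟩ := hx2
      exact Submodule.mem_span_singleton.mpr ⟨a, (Algebra.algebraMap_eq_smul_one a).symm⟩
    · rw [Submodule.span_le, Set.singleton_subset_iff]
      have : f 1 = 0 := by simp [hf, sbar]
      exact LinearMap.mem_ker.mpr this
  have hk1 : Module.finrank F (LinearMap.ker f) = 1 := by
    rw [hker1]; exact finrank_span_singleton one_ne_zero
  have hstep : ∀ j : ℕ, Module.finrank F (LinearMap.ker (f ^ (j + 1))) ≤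
      Module.finrank F (LinearMap.ker (f ^ j)) + 1 := by
    intro j
    have h3 := finrank_ker_comp_le' (f ^ j) f
    rw [hk1] at h3
    have h4 : f ^ (j + 1) = (f ^ j) ∘ₗ f := by rw [pow_succ]; rfl
    rw [h4]
    exact h3
  have hle : ∀ j : ℕ, Module.finrank F (LinearMap.ker (f ^ j)) ≤ j := by
    intro j
    induction j with
    | zero => simp [pow_zero, Module.End.one_eq_id]
    | succ j ih => have := hstep j; omega
  have htop : Module.finrank F (LinearMap.ker (f ^ (p ^ m))) = p ^ m := by
    rw [hfn, LinearMap.ker_zero, finrank_top, hn]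
  have hchain : ∀ t j : ℕ, Module.finrank F (LinearMap.ker (f ^ (j + t))) ≤
      Module.finrank F (LinearMap.ker (f ^ j)) + t := by
    intro t
    induction t with
    | zero => simp
    | succ t ih =>
      intro j
      have h4 := hstep (j + t)
      have h5 := ih j
      have h6 : j + (t + 1) = (j + t) + 1 := by omega
      rw [h6]
      omega
  have h1 := hle i
  have h2 := hchain (p ^ m - i) i
  rw [show i + (p ^ m - i) = p ^ m by omega, htop] at h2
  omega
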